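/- Let X be a connected graph in which every vertex has finite degree, and let x be a vertex. Then the group Aut(X,x) of graph automorphisms of X fixing x is either finite or uncountable. -/

import Mathlib

open SimpleGraph Filter

namespace CF

variable {V : Type*}

/-- A walk in a graph is a geodesic if its length realizes the graph distance
between its endpoints. -/
def IsGeodesic (G : SimpleGraph V) {u v : V} (p : G.Walk u v) : Prop :=
  p.length = G.dist u v

/-- `G` is δ-hyperbolic: every geodesic triangle is δ-thin, i.e. each side lies
in the δ-neighborhood of the union of the other two sides. -/
def IsDeltaHyperbolic (G : SimpleGraph V) (δ : ℝ) : Prop :=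
  ∀ ⦃a b c : V⦄ (p : G.Walk a b) (q : G.Walk b c) (r : G.Walk a c),
    IsGeodesic G p → IsGeodesic G q → IsGeodesic G r →
      (∀ z ∈ p.support, ∃ w, (w ∈ q.support ∨ w ∈ r.support) ∧ (G.dist z w : ℝ) ≤ δ) ∧
      (∀ z ∈ q.support, ∃ w, (w ∈ p.support ∨ w ∈ r.support) ∧ (G.dist z w : ℝ) ≤ δ) ∧
      (∀ z ∈ r.support, ∃ w, (w ∈ p.support ∨ w ∈ q.support) ∧ (G.dist z w : ℝ) ≤ δ)

/-- `G` has uniformly finite valence. -/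
def UnifFiniteValence (G : SimpleGraph V) : Prop :=
  ∃ D : ℕ, ∀ v : V, (G.neighborSet v).Finite ∧ (G.neighborSet v).ncard ≤ D

/-- The automorphism group of `G` acts transitively on vertices. -/
def VertexTransitive (G : SimpleGraph V) : Prop :=
  ∀ u v : V, ∃ φ : G ≃g G, φ u = v

/-- A δ-hyperbolike graph: connected, of uniformly finite valence, δ-hyperbolic
(with δ ≥ 0), and vertex-transitive. -/
def Hyperbolike (G : SimpleGraph V) (δ : ℝ) : Prop :=
  G.Connected ∧ UnifFiniteValence G ∧ 0 ≤ δ ∧ IsDeltaHyperbolic G δ ∧ VertexTransitive G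

/-- The ball of radius `n` about `x` (as a vertex set). -/
def ball (G : SimpleGraph V) (x : V) (n : ℕ) : Set V := {y | G.dist x y ≤ n}

/-- A formal power series over ℝ is rational if `q·P = p` for polynomials `p`, `q`
with `q(0) ≠ 0`. -/
def IsRationalPS (P : PowerSeries ℝ) : Prop :=
  ∃ p q : Polynomial ℝ, q.coeff 0 ≠ 0 ∧ (q : PowerSeries ℝ) * P = (p : PowerSeries ℝ)

/-- Two geodesics starting at the same point `T`-synchronously fellow travel:
`d(γ(ℓ−i), γ′(ℓ′−i)) ≤ T` for all `0 ≤ i ≤ min(ℓ,ℓ′)`. -/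
def SyncFellowTravel (G : SimpleGraph V) (T : ℝ) {x y z : V}
    (p : G.Walk x y) (q : G.Walk x z) : Prop :=
  ∀ i : ℕ, i ≤ min p.length q.length →
    (G.dist (p.getVert (p.length - i)) (q.getVert (q.length - i)) : ℝ) ≤ T

/-- `z` is a competitor of `y` (with respect to the base point `x`):
`z ∈ B_{2δ+1}(y)`, `d(x,z) ≤ d(x,y)`, and some geodesic from `x` to `z`
`(2δ+1)`-synchronously fellow travels every geodesic from `x` to `y`. -/
def Competitor (G : SimpleGraph V) (δ : ℝ) (x y z : V) : Prop :=
  (G.dist y z : ℝ) ≤ 2*δ+1 ∧ G.dist x z ≤ G.dist x y ∧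
  ∃ p : G.Walk x z, IsGeodesic G p ∧
    ∀ q : G.Walk x y, IsGeodesic G q → SyncFellowTravel G (2*δ+1) p q

/-- `F` is a tournament at `y` (with base point `x`); only the values of `F` on
the ball `B_{2δ+1}(y)` are constrained. -/
def Tournament (G : SimpleGraph V) (δ : ℝ) (x y : V) (F : V → ℤ) : Prop :=
  (∀ z : V, (G.dist y z : ℝ) ≤ 2*δ+1 →
    (G.dist x z : ℤ) - (G.dist x y : ℤ) ≤ F z ∧ F z ≤ (G.dist y z : ℤ)) ∧
  (∀ z : V, Competitor G δ x y z → (G.dist x z : ℤ) = (G.dist x y : ℤ) + F z)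

/-- Tournaments `(y,F)` and `(y',F')` have the same type: some automorphism `φ`
carries `y` to `y'` with `F = F' ∘ φ` (on the ball `B_{2δ+1}(y)`). -/
def SameTournamentType (G : SimpleGraph V) (δ : ℝ) (y y' : V) (F F' : V → ℤ) : Prop :=
  ∃ φ : G ≃g G, φ y = y' ∧ ∀ z : V, (G.dist y z : ℝ) ≤ 2*δ+1 → F z = F' (φ z)

/-- The cone of `y` with respect to the base point `x`. -/
def cone (G : SimpleGraph V) (x y : V) : Set V :=
  {z | G.dist x z = G.dist x y + G.dist y z}

/-- There is a quasi-isometry from the vertices of `G` (with the path metric) to ℝ. -/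
def QuasiIsometricToReal (G : SimpleGraph V) : Prop :=
  ∃ (f : V → ℝ) (C : ℝ), 1 ≤ C ∧
    (∀ u v : V, (G.dist u v : ℝ)/C - C ≤ |f u - f v| ∧ |f u - f v| ≤ C * G.dist u v + C) ∧
    (∀ r : ℝ, ∃ v : V, |r - f v| ≤ C)

/-- `G` is nonelementary: infinitely many vertices and not quasi-isometric to ℝ. -/
def Nonelementary (G : SimpleGraph V) : Prop :=
  Infinite V ∧ ¬ QuasiIsometricToReal G

/-- `ω` is an opposite series of the power series with (positive) coefficients `a`:
the polynomials `Xₙ(P)(s) = Σ_{k≤n} (a_{n-k}/aₙ) s^k` accumulate coefficientwise at `ω`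
along some strictly increasing sequence of indices. -/
def OppositeSeries (a : ℕ → ℝ) (ω : ℕ → ℝ) : Prop :=
  ∃ φ : ℕ → ℕ, StrictMono φ ∧
    ∀ k : ℕ, Tendsto (fun j => a (φ j - k) / a (φ j)) atTop (nhds (ω k))

end CF

namespace CF

section AutAux

variable {V : Type*} {G : SimpleGraph V}

lemma dist_map_iso (hconn : G.Connected) (φ : G ≃g G) (u v : V) :
    G.dist (φ u) (φ v) = G.dist u v := by
  have key : ∀ (ψ : G ≃g G) (a b : V), G.dist (ψ a) (ψ b) ≤ G.dist a b := fun ψ a b => by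
    obtain ⟨p, hp⟩ := hconn.exists_walk_length_eq_dist a b
    calc G.dist (ψ a) (ψ b) ≤ (p.map ψ.toHom).length := dist_le _
      _ = G.dist a b := by rw [Walk.length_map, hp]
  refine le_antisymm (key φ u v) ?_
  simpa using key φ.symm (φ u) (φ v)

/-- The finite product `σ (k-1) ^ ε (k-1) ∘ ⋯ ∘ σ 0 ^ ε 0` (as an isomorphism;
`trans` composes left-to-right, so the last factor `σ (k-1)` is applied first). -/
def prodIso (G : SimpleGraph V) (σ : ℕ → G ≃g G) (ε : ℕ → Bool) : ℕ → G ≃g G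
  | 0 => Iso.refl
  | (k+1) => ((if ε k then σ k else Iso.refl)).trans (prodIso G σ ε k)

section Prod

variable (σ : ℕ → G ≃g G) (x : V) (F : ℕ → ℕ)

lemma prodIso_succ_apply (ε : ℕ → Bool) (k : ℕ) (v : V) :
    prodIso G σ ε (k+1) v = prodIso G σ ε k ((if ε k then σ k else Iso.refl) v) := rfl

variable (hF : Monotone F) (hFk : ∀ k, k ≤ F k)
  (hfix : ∀ k v, G.dist x v ≤ F k → σ k v = v)

include hF hfix in
lemma prodIso_stable (ε : ℕ → Bool) {v : V} {k : ℕ} (hv : G.dist x v ≤ F k) :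
    ∀ m, k ≤ m → prodIso G σ ε m v = prodIso G σ ε k v := by
  intro m hm
  induction m with
  | zero => have : k = 0 := by omega
            rw [this]
  | succ m ih =>
      rcases Nat.lt_or_ge k (m+1) with h | h
      · have hkm : k ≤ m := by omega
        have hfixm : σ m v = v := hfix m v (hv.trans (hF hkm))
        have : (if ε m then σ m else Iso.refl) v = v := by
          by_cases hε : ε m <;> simp [hε, hfixm]
        rw [prodIso_succ_apply, this, ih hkm]
      · have : k = m + 1 := by omega
        rw [this]

include hfix in
lemma prodIso_fix_x (ε : ℕ → Bool) (k : ℕ) : prodIso G σ ε k x = x := by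
  induction k with
  | zero => rfl
  | succ k ih =>
      have hfixk : σ k x = x := hfix k x (by simp [dist_self])
      have : (if ε k then σ k else Iso.refl) x = x := by
        by_cases hε : ε k <;> simp [hε, hfixk]
      rw [prodIso_succ_apply, this, ih]

lemma prodIso_congr {ε ε' : ℕ → Bool} (k : ℕ) (h : ∀ j, j < k → ε j = ε' j) :
    prodIso G σ ε k = prodIso G σ ε' k := by
  induction k with
  | zero => rfl
  | succ k ih =>
      show (_ : G ≃g G).trans _ = (_ : G ≃g G).trans _
      rw [h k (by omega), ih (fun j hj => h j (by omega))]

/-- The pointwise limit of the `prodIso`s. -/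
noncomputable def limitMap (ε : ℕ → Bool) (v : V) : V := prodIso G σ ε (G.dist x v) v

include hF hFk hfix in
lemma limitMap_eq (ε : ℕ → Bool) (v : V) {m : ℕ} (hm : G.dist x v ≤ m) :
    limitMap σ x ε v = prodIso G σ ε m v := by
  have h1 : G.dist x v ≤ F (G.dist x v) := (hFk _)
  exact (prodIso_stable σ x F hF hfix ε h1 m hm).symm

include hF hFk hfix in
lemma limitMap_bijective (hconn : G.Connected) (ε : ℕ → Bool) :
    Function.Bijective (limitMap σ x ε) := by
  constructor
  · intro u v huv
    rw [limitMap_eq σ x F hF hFk hfix ε u (le_max_left (G.dist x u) (G.dist x v)),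
        limitMap_eq σ x F hF hFk hfix ε v (le_max_right (G.dist x u) (G.dist x v))] at huv
    exact (prodIso G σ ε (max (G.dist x u) (G.dist x v))).injective huv
  · intro z
    have hx := prodIso_fix_x σ x F hfix ε (G.dist x z)
    have hxs : (prodIso G σ ε (G.dist x z)).symm x = x := by
      apply (prodIso G σ ε (G.dist x z)).injective
      rw [RelIso.apply_symm_apply, hx]
    refine ⟨(prodIso G σ ε (G.dist x z)).symm z, ?_⟩
    have hd : G.dist x ((prodIso G σ ε (G.dist x z)).symm z) = G.dist x z := by
      have h2 := dist_map_iso hconn (prodIso G σ ε (G.dist x z)).symm x z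
      rwa [hxs] at h2
    rw [limitMap_eq σ x F hF hFk hfix ε _ (le_of_eq hd)]
    exact (prodIso G σ ε (G.dist x z)).apply_symm_apply z

include hF hFk hfix in
lemma limitMap_adj (ε : ℕ → Bool) (u v : V) :
    G.Adj (limitMap σ x ε u) (limitMap σ x ε v) ↔ G.Adj u v := by
  rw [limitMap_eq σ x F hF hFk hfix ε u (le_max_left (G.dist x u) (G.dist x v)),
      limitMap_eq σ x F hF hFk hfix ε v (le_max_right (G.dist x u) (G.dist x v))]
  exact (prodIso G σ ε (max (G.dist x u) (G.dist x v))).map_adj_iff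

/-- The limit of the partial products, as a graph automorphism. -/
noncomputable def limitIso (hconn : G.Connected) (hF : Monotone F) (hFk : ∀ k, k ≤ F k)
    (hfix : ∀ k v, G.dist x v ≤ F k → σ k v = v) (ε : ℕ → Bool) : G ≃g G where
  toEquiv := Equiv.ofBijective _ (limitMap_bijective σ x F hF hFk hfix hconn ε)
  map_rel_iff' := @fun u v => limitMap_adj σ x F hF hFk hfix ε u v

lemma limitIso_apply (hconn : G.Connected) (hF : Monotone F) (hFk : ∀ k, k ≤ F k)
    (hfix : ∀ k v, G.dist x v ≤ F k → σ k v = v) (ε : ℕ → Bool) (v : V) :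
    limitIso σ x F hconn hF hFk hfix ε v = limitMap σ x ε v := rfl

include hF hFk hfix in
lemma limitIso_fix_x (hconn : G.Connected) (ε : ℕ → Bool) :
    limitIso σ x F hconn hF hFk hfix ε x = x := by
  rw [limitIso_apply, limitMap_eq σ x F hF hFk hfix ε x (m := 0) (le_of_eq dist_self)]
  rfl

include hF hFk hfix in
lemma limitMap_inj (w : ℕ → V) (hw1 : ∀ k, σ k (w k) ≠ w k)
    (hw2 : ∀ k, G.dist x (w k) ≤ F (k+1)) {ε ε' : ℕ → Bool} (hne : ε ≠ ε') :
    limitMap σ x ε ≠ limitMap σ x ε' := by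
  classical
  have hex : ∃ k, ε k ≠ ε' k := by
    by_contra h; push_neg at h; exact hne (funext h)
  set k := Nat.find hex with hkdef
  have hk : ε k ≠ ε' k := Nat.find_spec hex
  have hmin : ∀ j, j < k → ε j = ε' j := fun j hj => not_not.mp (Nat.find_min hex hj)
  intro heq
  have hval := congrFun heq (w k)
  set m := max (k+1) (G.dist x (w k)) with hm
  have h1 : ∀ δ : ℕ → Bool, limitMap σ x δ (w k) = prodIso G σ δ (k+1) (w k) := by
    intro δ
    rw [limitMap_eq σ x F hF hFk hfix δ _ (le_max_right (k+1) (G.dist x (w k)) : _ ≤ m)]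
    exact prodIso_stable σ x F hF hfix δ (hw2 k) m (le_max_left _ _)
  rw [h1 ε, h1 ε'] at hval
  rw [prodIso_succ_apply, prodIso_succ_apply,
      prodIso_congr σ (ε := ε) (ε' := ε') k hmin] at hval
  have hval2 := (prodIso G σ ε' k).injective hval
  cases hε : ε k <;> cases hε' : ε' k <;>
    simp [hε, hε', RelIso.refl_apply] at hk hval2 <;>
    first
      | exact hw1 k hval2
      | exact hw1 k hval2.symm

end Prod

lemma uncountable_funs : ¬ Countable (ℕ → Bool) := by
  intro h
  obtain ⟨g, hg⟩ := exists_surjective_nat (ℕ → Bool)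
  obtain ⟨n, hn⟩ := hg (fun n => !(g n n))
  have := congrFun hn n
  simp at this

lemma exists_adj_dist_le (hconn : G.Connected) {x y : V} {n : ℕ}
    (h : G.dist x y = n + 1) : ∃ z, G.Adj z y ∧ G.dist x z ≤ n := by
  obtain ⟨p, hp⟩ := hconn.exists_walk_length_eq_dist x y
  rw [h] at hp
  refine ⟨p.getVert n, ?_, ?_⟩
  · have hadj := p.adj_getVert_succ (i := n) (by omega)
    rwa [show p.getVert (n+1) = y from p.getVert_of_length_le (by omega)] at hadj
  · have hnn : ¬ p.reverse.Nil := by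
      rw [Walk.not_nil_iff_lt_length, Walk.length_reverse]; omega
    have hz : p.reverse.getVert 1 = p.getVert n := by
      rw [Walk.getVert_reverse, hp]; norm_num
    have hq := dist_le (p.reverse.tail.reverse)
    have hlen : p.reverse.tail.reverse.length = n := by
      have := Walk.length_tail_add_one hnn
      rw [Walk.length_reverse] at this ⊢
      omega
    rw [hlen] at hq
    rw [← hz]; exact hq

lemma ball_finite (hconn : G.Connected) (hlf : ∀ v : V, (G.neighborSet v).Finite)
    (x : V) : ∀ n : ℕ, {y | G.dist x y ≤ n}.Finite := by
  intro n
  induction n with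
  | zero =>
      apply Set.Finite.subset (Set.finite_singleton x)
      intro y hy
      simp only [Set.mem_setOf_eq, Nat.le_zero] at hy
      have := (hconn.dist_eq_zero_iff (u := x) (v := y)).mp hy
      simp [this.symm]
  | succ n ih =>
      apply Set.Finite.subset (ih.union (Set.Finite.biUnion ih (fun z _ => hlf z)))
      intro y hy
      simp only [Set.mem_setOf_eq] at hy
      rcases Nat.lt_or_ge (G.dist x y) (n+1) with h | h
      · exact Or.inl (by simpa using Nat.lt_succ_iff.mp h)
      · have hd : G.dist x y = n + 1 := le_antisymm hy h
        obtain ⟨z, hadj, hz⟩ := exists_adj_dist_le hconn hd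
        exact Or.inr (Set.mem_biUnion hz ((G.mem_neighborSet z y).mpr hadj))


lemma dist_map_iso_fix (hconn : G.Connected) (φ : G ≃g G) {x : V} (hφ : φ x = x) (v : V) :
    G.dist x (φ v) = G.dist x v := by
  have h := dist_map_iso hconn φ x v
  rwa [hφ] at h

end AutAux

/-- the stabilizer `Aut(X,x)` of a vertex in a connected locally
finite graph is either finite or uncountable. -/
theorem aut_finite_or_uncountable {V : Type*} (G : SimpleGraph V) (hconn : G.Connected)
    (hlf : ∀ v : V, (G.neighborSet v).Finite) (x : V) :
    Finite {φ : G ≃g G // φ x = x} ∨ ¬ Countable {φ : G ≃g G // φ x = x} := by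
  rw [or_iff_not_imp_left]
  intro hnf hcount
  rw [not_finite_iff_infinite] at hnf
  classical
  have hball := ball_finite hconn hlf x
  have key : ∀ n : ℕ, ∃ q : (G ≃g G) × V,
      (∀ v, G.dist x v ≤ n → q.1 v = v) ∧ q.1 q.2 ≠ q.2 := by
    intro n
    haveI := (hball n).to_subtype
    obtain ⟨φ, ψ, hne, heq⟩ := Finite.exists_ne_map_eq_of_infinite
      (fun (φ : {φ : G ≃g G // φ x = x}) (y : {y | G.dist x y ≤ n}) =>
        (⟨φ.1 y.1, by
          have hdy : G.dist x (φ.1 y.1) = G.dist x y.1 :=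
            dist_map_iso_fix hconn φ.1 φ.2 y.1
          simpa only [Set.mem_setOf_eq, hdy] using y.2⟩ : {y | G.dist x y ≤ n}))
    have hsymmx : φ.1.symm x = x := by
      apply φ.1.injective
      rw [RelIso.apply_symm_apply, φ.2]
    obtain ⟨u, hu⟩ : ∃ u, φ.1 u ≠ ψ.1 u := by
      by_contra h
      push_neg at h
      exact hne (Subtype.ext (by ext v; exact h v))
    refine ⟨⟨φ.1.symm.trans ψ.1, φ.1 u⟩, ?_, ?_⟩
    · intro v hv
      have hvu : G.dist x (φ.1.symm v) ≤ n := by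
        have hd := dist_map_iso_fix hconn φ.1.symm hsymmx v
        simpa only [hd] using hv
      have := congrFun heq ⟨φ.1.symm v, hvu⟩
      have h2 := Subtype.ext_iff.mp this
      have h3 : φ.1 (φ.1.symm v) = ψ.1 (φ.1.symm v) := h2
      show ψ.1 (φ.1.symm v) = v
      rw [← h3, RelIso.apply_symm_apply]
    · show ψ.1 (φ.1.symm (φ.1 u)) ≠ φ.1 u
      rw [RelIso.symm_apply_apply]
      exact fun h => hu h.symm
  choose q hfixq hmoveq using key
  set F : ℕ → ℕ := fun k =>
    Nat.rec 0 (fun _ nk => max (nk + 1) (G.dist x (q nk).2)) k with hFdef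
  have hFs : ∀ k, F (k+1) = max (F k + 1) (G.dist x (q (F k)).2) := fun k => rfl
  set σ' : ℕ → G ≃g G := fun k => (q (F k)).1 with hσdef
  set w' : ℕ → V := fun k => (q (F k)).2 with hwdef
  have hFmono : Monotone F := monotone_nat_of_le_succ (fun k => by rw [hFs]; omega)
  have hFk : ∀ k, k ≤ F k := by
    intro k
    induction k with
    | zero => exact Nat.zero_le _
    | succ k ih => rw [hFs]; omega
  have hfix : ∀ k v, G.dist x v ≤ F k → σ' k v = v := fun k v hv => hfixq (F k) v hv
  have hw1 : ∀ k, σ' k (w' k) ≠ w' k := fun k => hmoveq (F k)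
  have hw2 : ∀ k, G.dist x (w' k) ≤ F (k+1) := fun k => by
    rw [hFs]; exact le_max_right _ _
  set f : (ℕ → Bool) → {φ : G ≃g G // φ x = x} :=
    fun ε => ⟨limitIso σ' x F hconn hFmono hFk hfix ε,
      limitIso_fix_x σ' x F hFmono hFk hfix hconn ε⟩ with hfdef
  have hf : Function.Injective f := by
    intro ε ε' h
    by_contra hne
    apply limitMap_inj σ' x F hFmono hFk hfix w' hw1 hw2 hne
    funext v
    have h2 : (limitIso σ' x F hconn hFmono hFk hfix ε : G ≃g G)
        = limitIso σ' x F hconn hFmono hFk hfix ε' := Subtype.ext_iff.mp h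
    exact DFunLike.congr_fun h2 v
  exact uncountable_funs hf.countable

end CF
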